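/- Let p be an odd prime, q = p^m, and u a positive integer with v = gcd(m, u) such that m/v ≡ 0 (mod 4). Then the number of c in F_q such that the equation X^(p^(2u)) + X = c^(p^u) has a solution X in F_q equals p^(m - 2v). -/

import Mathlib

open Finset Polynomial

section aux

set_option linter.unusedSectionVars false

variable {p : ℕ} [Fact p.Prime] {F : Type*} [Field F] [Fintype F] [CharP F p]

lemma fix_mul {x : F} {a : ℕ} (h : x ^ p ^ a = x) (n : ℕ) : x ^ p ^ (a * n) = x := by
  induction n with
  | zero => simp
  | succ n ih => rw [Nat.mul_succ, pow_add, pow_mul, ih, h]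

lemma fix_gcd {x : F} {a b : ℕ} (hb : 0 < b)
    (hxa : x ^ p ^ a = x) (hxb : x ^ p ^ b = x) : x ^ p ^ Nat.gcd a b = x := by
  rcases lt_or_eq_of_le (Nat.le_of_dvd hb (Nat.gcd_dvd_right a b)) with hlt | heq
  · obtain ⟨s, -, hs⟩ := Nat.exists_mul_mod_eq_gcd hlt
    have h1 : a * s = b * (a * s / b) + Nat.gcd a b := by
      conv_lhs => rw [← Nat.div_add_mod (a * s) b, hs]
    have h2 : x ^ p ^ (a * s) = x := fix_mul hxa s
    rw [h1, pow_add, pow_mul, fix_mul hxb _] at h2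
    exact h2
  · rw [heq]; exact hxb

open scoped Classical in
lemma card_ker_pow (k : ℕ) (hk : 0 < k) (m : ℕ) (hdvd : 2 * k ∣ m) (hm : 0 < m)
    (hF : Fintype.card F = p ^ m) :
    (univ.filter (fun x : F => x ^ p ^ k + x = 0)).card = p ^ k := by
  have hp1 : 1 < p := (Fact.out (p := p.Prime)).one_lt
  have hpk1 : 1 < p ^ k := Nat.one_lt_pow hk.ne' hp1
  set h : F[X] := X ^ p ^ k + X with hh
  have hmonic : h.Monic := by
    apply monic_X_pow_add
    rw [degree_X]
    exact_mod_cast hpk1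
  have hdeg : h.natDegree = p ^ k := by
    rw [hh, natDegree_add_eq_left_of_natDegree_lt] <;>
      simp [natDegree_X_pow, natDegree_X, hpk1]
  have hsep : h.Separable := by
    have hder : derivative h = 1 := by
      rw [hh]
      simp only [derivative_add, derivative_X_pow, derivative_X]
      have hz : ((p : F)) ^ k = 0 := by
        simp [CharP.cast_eq_zero F p, hk.ne']
      rw [Nat.cast_pow, hz]
      simp
    rw [Polynomial.Separable, hder]
    exact isCoprime_one_right
  have e1 : p ^ k * p ^ k = p ^ (2 * k) := by rw [two_mul, pow_add]
  have base : h ∣ (X : F[X]) ^ p ^ (2 * k) - X := by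
    have hid : (X : F[X]) ^ p ^ (2 * k) - X = h ^ p ^ k - h := by
      rw [hh, add_pow_char_pow, ← pow_mul, e1]; ring
    rw [hid]
    exact dvd_sub (dvd_pow_self h (by positivity)) dvd_rfl
  have key : ∀ j : ℕ, h ∣ (X : F[X]) ^ p ^ (2 * k * j) - X := by
    intro j
    induction j with
    | zero => simp
    | succ j ih =>
      have e2 : p ^ (2 * k * j) * p ^ (2 * k) = p ^ (2 * k * (j + 1)) := by
        rw [← pow_add, Nat.mul_succ]
      have step : (X : F[X]) ^ p ^ (2 * k * (j + 1)) - X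
          = ((X : F[X]) ^ p ^ (2 * k * j) - X) ^ p ^ (2 * k)
            + ((X : F[X]) ^ p ^ (2 * k) - X) := by
        rw [sub_pow_char_pow, ← pow_mul, e2]; ring
      rw [step]
      exact dvd_add (dvd_pow ih (by positivity)) base
  have hdvdq : h ∣ (X : F[X]) ^ p ^ m - X := by
    obtain ⟨j, hj⟩ := hdvd
    rw [hj]; exact key j
  obtain ⟨g, hg⟩ := hdvdq
  have hq0 : ((X : F[X]) ^ p ^ m - X) ≠ 0 :=
    FiniteField.X_pow_card_pow_sub_X_ne_zero F hm.ne' hp1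
  have hg0 : g ≠ 0 := by
    intro h0; rw [h0, mul_zero] at hg; exact hq0 hg
  have hqdeg : ((X : F[X]) ^ p ^ m - X).natDegree = p ^ m :=
    FiniteField.X_pow_card_pow_sub_X_natDegree_eq F hm.ne' hp1
  have hgdeg : g.natDegree = p ^ m - p ^ k := by
    have := hqdeg
    rw [hg, natDegree_mul hmonic.ne_zero hg0, hdeg] at this
    omega
  have hroots : ((X : F[X]) ^ p ^ m - X).roots = Finset.univ.val := by
    rw [← hF]
    exact FiniteField.roots_X_pow_card_sub_X F
  have hsum : Multiset.card h.roots + Multiset.card g.roots = p ^ m := by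
    have h2 : h.roots + g.roots = (Finset.univ : Finset F).val := by
      rw [← roots_mul (hg ▸ hq0), ← hg, hroots]
    have h3 := congrArg Multiset.card h2
    rw [Multiset.card_add] at h3
    rw [h3, ← Finset.card_def, Finset.card_univ, hF]
  have hb1 : Multiset.card h.roots ≤ p ^ k := hdeg ▸ card_roots' h
  have hb2 : Multiset.card g.roots ≤ p ^ m - p ^ k := hgdeg ▸ card_roots' g
  have hcard : Multiset.card h.roots = p ^ k := by
    have hle : p ^ k ≤ p ^ m := Nat.pow_le_pow_right hp1.le (by
      obtain ⟨j, hj⟩ := ‹2 * k ∣ m›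
      rcases Nat.eq_zero_or_pos j with rfl | hj0
      · omega
      · nlinarith)
    omega
  have hset : univ.filter (fun x : F => x ^ p ^ k + x = 0) = h.roots.toFinset := by
    ext x
    simp only [mem_filter, mem_univ, true_and, Multiset.mem_toFinset,
      mem_roots hmonic.ne_zero, IsRoot.def, hh, eval_add, eval_pow, eval_X]
    rw [mem_roots (by rw [← hh]; exact hmonic.ne_zero), IsRoot.def]; simp
  rw [hset, Multiset.toFinset_card_of_nodup (nodup_roots hsep), hcard]

end aux
open Finset

open scoped Classical in
theorem stmt_8 (p m u : ℕ) [Fact p.Prime] (hp : Odd p) (hm : 0 < m) (hu : 0 < u)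
    (v : ℕ) (hv : v = Nat.gcd m u) (h4 : m / v % 4 = 0)
    (F : Type*) [Field F] [Fintype F] [Algebra (ZMod p) F]
    (hF : Fintype.card F = p ^ m) :
    (Finset.univ.filter (fun c : F =>
        ∃ X : F, X ^ p ^ (2 * u) + X = c ^ p ^ u)).card = p ^ (m - 2 * v) := by
  haveI : CharP F p := charP_of_injective_algebraMap (algebraMap (ZMod p) F).injective p
  have hp1 : 1 < p := (Fact.out (p := p.Prime)).one_lt
  -- arithmetic setup
  have hv0 : 0 < v := by rw [hv]; exact Nat.gcd_pos_of_pos_left u hm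
  have hvm : v ∣ m := hv ▸ Nat.gcd_dvd_left m u
  have hvu : v ∣ u := hv ▸ Nat.gcd_dvd_right m u
  set m' := m / v with hm'def
  set u' := u / v with hu'def
  have hm' : v * m' = m := Nat.mul_div_cancel' hvm
  have hu' : v * u' = u := Nat.mul_div_cancel' hvu
  have h4m : 4 ∣ m' := Nat.dvd_of_mod_eq_zero h4
  have hcop : Nat.Coprime m' u' := by
    have := Nat.coprime_div_gcd_div_gcd (m := m) (n := u) (hv ▸ hv0)
    rwa [← hv] at this
  have huodd : u' % 2 = 1 := by
    rcases Nat.even_or_odd u' with he | ho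
    · exfalso
      obtain ⟨s, hs⟩ := he
      obtain ⟨w, hw⟩ := h4m
      have h2 : (2 : ℕ) ∣ Nat.gcd m' u' := Nat.dvd_gcd ⟨2 * w, by omega⟩ ⟨s, by omega⟩
      rw [hcop] at h2
      omega
    · exact Nat.odd_iff.mp ho
  obtain ⟨w, hw⟩ := h4m
  have hgcd4 : Nat.gcd (4 * u) m = 4 * v := by
    have e1 : 4 * u = v * (4 * u') := by rw [← hu']; ring
    have e2 : Nat.gcd (4 * u) m = v * Nat.gcd (4 * u') m' := by
      rw [e1, ← hm', Nat.gcd_mul_left]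
    have e3 : Nat.gcd (4 * u') m' = 4 := by
      have : Nat.gcd (4 * u') (4 * w) = 4 * Nat.gcd u' w := by
        rw [Nat.gcd_comm (4 * u'), Nat.gcd_mul_left, Nat.gcd_comm]
      have hgw : Nat.gcd u' w = 1 := by
        have hd : Nat.gcd u' w ∣ Nat.gcd m' u' := by
          apply Nat.dvd_gcd
          · exact (Nat.gcd_dvd_right u' w).trans ⟨4, by omega⟩
          · exact Nat.gcd_dvd_left u' w
        rw [hcop] at hd
        exact Nat.eq_one_of_dvd_one hd
      rw [hw, this, hgw]
    rw [e2, e3]; omega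
  obtain ⟨t, ht2⟩ : ∃ t, u' = 2 * t + 1 := ⟨u' / 2, by omega⟩
  have ht : 2 * u = 4 * v * t + 2 * v := by rw [← hu', ht2]; ring
  have h4vm : 4 * v ∣ m := ⟨w, by rw [← hm', hw]; ring⟩
  have h2vm : 2 * v ≤ m := by
    have := Nat.le_of_dvd hm h4vm
    omega
  -- the Frobenius fixed-point reduction: common step
  have hstep : ∀ x : F, x ^ p ^ (4 * v) = x → x ^ p ^ (2 * u) = x ^ p ^ (2 * v) := by
    intro x hx
    rw [ht, pow_add, pow_mul, fix_mul hx t]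
  have hxm : ∀ x : F, x ^ p ^ m = x := by
    intro x
    have := FiniteField.pow_card x
    rwa [hF] at this
  have hoddpow : ∀ n : ℕ, Odd (p ^ n) := fun n => hp.pow
  -- kernel set equality
  have hker : ∀ x : F, (x ^ p ^ (2 * u) + x = 0) ↔ (x ^ p ^ (2 * v) + x = 0) := by
    intro x
    constructor
    · intro hx
      have hx' : x ^ p ^ (2 * u) = -x := eq_neg_of_add_eq_zero_left hx
      have h4u : x ^ p ^ (4 * u) = x := by
        have e : x ^ p ^ (4 * u) = (x ^ p ^ (2 * u)) ^ p ^ (2 * u) := by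
          rw [← pow_mul, ← pow_add, show 2 * u + 2 * u = 4 * u from by omega]
        rw [e, hx', (hoddpow (2 * u)).neg_pow, hx', neg_neg]
      have h4v : x ^ p ^ (4 * v) = x := by
        have := fix_gcd (p := p) hm h4u (hxm x)
        rwa [hgcd4] at this
      rw [← hstep x h4v]
      exact hx
    · intro hx
      have hx' : x ^ p ^ (2 * v) = -x := eq_neg_of_add_eq_zero_left hx
      have h4v : x ^ p ^ (4 * v) = x := by
        have e : x ^ p ^ (4 * v) = (x ^ p ^ (2 * v)) ^ p ^ (2 * v) := by
          rw [← pow_mul, ← pow_add, show 2 * v + 2 * v = 4 * v from by omega]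
        rw [e, hx', (hoddpow (2 * v)).neg_pow, hx', neg_neg]
      rw [hstep x h4v]
      exact hx
  have hkercard : (univ.filter (fun x : F => x ^ p ^ (2 * u) + x = 0)).card = p ^ (2 * v) := by
    have hc := card_ker_pow (p := p) (F := F) (2 * v) (by omega) m ⟨w, by rw [← hm', hw]; ring⟩ hm hF
    rw [← hc]
    apply Finset.card_bij (fun x _ => x)
    · intro x hx
      simp only [mem_filter, mem_univ, true_and] at hx ⊢
      exact (hker x).mp hx
    · intro a b _ _ h; exact h
    · intro b hb
      simp only [mem_filter, mem_univ, true_and] at hb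
      exact ⟨b, by simp only [mem_filter, mem_univ, true_and]; exact (hker b).mpr hb, rfl⟩
  -- Frobenius^u bijection
  have hfrobinj : Function.Injective (fun x : F => x ^ p ^ u) := by
    intro a b hab
    simp only at hab
    have : (a - b) ^ p ^ u = 0 := by rw [sub_pow_char_pow, hab, sub_self]
    exact sub_eq_zero.mp (pow_eq_zero_iff (n := p ^ u) (by positivity) |>.mp this)
  have hfrobsurj : Function.Surjective (fun x : F => x ^ p ^ u) :=
    Finite.surjective_of_injective hfrobinj
  -- reduce to image of T
  set T : F → F := fun x => x ^ p ^ (2 * u) + x with hTdef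
  have hTsub : ∀ a b : F, T (a - b) = T a - T b := by
    intro a b
    simp only [hTdef, sub_pow_char_pow]
    ring
  have hcardeq : (univ.filter (fun c : F =>
        ∃ X : F, X ^ p ^ (2 * u) + X = c ^ p ^ u)).card
      = (univ.image T).card := by
    apply Finset.card_bij (fun c _ => c ^ p ^ u)
    · intro c hc
      simp only [mem_filter, mem_univ, true_and] at hc
      obtain ⟨X, hX⟩ := hc
      exact mem_image.mpr ⟨X, mem_univ X, hX⟩
    · intro a _ b _ hab
      exact hfrobinj hab
    · intro y hy
      obtain ⟨X, -, hX⟩ := mem_image.mp hy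
      obtain ⟨c, hc⟩ := hfrobsurj y
      refine ⟨c, ?_, hc⟩
      simp only [mem_filter, mem_univ, true_and]
      exact ⟨X, by show T X = c ^ p ^ u; rw [hX]; exact hc.symm⟩
  rw [hcardeq]
  -- fiber count
  have hfib : ∀ y ∈ univ.image T, (univ.filter (fun x : F => T x = y)).card = p ^ (2 * v) := by
    intro y hy
    obtain ⟨x₀, -, hx₀⟩ := mem_image.mp hy
    rw [← hkercard]
    apply Finset.card_bij' (fun x _ => x - x₀) (fun z _ => z + x₀)
    · intro x hx
      simp only [mem_filter, mem_univ, true_and] at hx ⊢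
      have : T (x - x₀) = 0 := by rw [hTsub, hx, hx₀, sub_self]
      simpa [hTdef] using this
    · intro z hz
      simp only [mem_filter, mem_univ, true_and] at hz ⊢
      have hz0 : T z = 0 := hz
      have : T (z + x₀) = T z + T x₀ := by
        have h5 := hTsub (z + x₀) x₀
        simp only [add_sub_cancel_right] at h5
        rw [h5]; ring
      rw [this, hz0, zero_add, hx₀]
    · intro x _; ring
    · intro z _; ring
  have hsum := Finset.card_eq_sum_card_fiberwise
    (f := T) (s := (univ : Finset F)) (t := univ.image T)
    (fun x _ => mem_image_of_mem T (mem_univ x))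
  rw [Finset.sum_congr rfl hfib, Finset.sum_const, smul_eq_mul, card_univ, hF] at hsum
  have hpow : p ^ (m - 2 * v) * p ^ (2 * v) = p ^ m := by
    rw [← pow_add]
    congr 1
    omega
  have hpos : 0 < p ^ (2 * v) := by positivity
  exact Nat.eq_of_mul_eq_mul_right hpos (hsum.symm.trans hpow.symm)
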